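/- For every integer m ≥ 1, the measure ν_m is a probability measure supported on E_m, and its logarithmic potential satisfies, for every z ∈ ℂ, ∫_ℂ log|x − z| dν_m(x) = (1/(mπ)) ∫_{−2}^{2} log|t − z^m| / √(4 − t²) dt; in other words, ν_m is the equilibrium measure of E_m, whose potential is (1/m)·G_{[−2,2]}(z^m) (the Green's function of the complement of [−2,2] evaluated at z^m, divided by m). -/

import Mathlib

open MeasureTheory

/-- The measure `λ_m` on the real interval `[0, 2^{1/m}]` with density
`t ↦ t^{m-1} / (π √(4 - t^{2m}))` with respect to Lebesgue measure. -/
noncomputable def lamMeas (m : ℕ) : Measure ℝ :=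
  (volume.restrict (Set.Icc (0 : ℝ) ((2 : ℝ) ^ ((1 : ℝ) / (m : ℝ))))).withDensity
    (fun t => ENNReal.ofReal (t ^ (m - 1) / (Real.pi * Real.sqrt (4 - t ^ (2 * m)))))

/-- The equilibrium measure `ν_m` of the star `E_m = {z : z^m ∈ [-2,2]}`:
`ν_m = Σ_{k=1}^{2m} (φ_k)_* λ_m` where `φ_k(t) = e^{iπk/m} t`. -/
noncomputable def nuMeas (m : ℕ) : Measure ℂ :=
  ∑ k ∈ Finset.Icc 1 (2 * m),
    Measure.map
      (fun t : ℝ => Complex.exp (Real.pi * (k : ℂ) * Complex.I / (m : ℂ)) * (t : ℂ))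
      (lamMeas m)


/-- The star `E_m = { z ∈ ℂ : z^m ∈ [-2, 2] }`. -/
def Estar (m : ℕ) : Set ℂ := { z : ℂ | ∃ x ∈ Set.Icc (-2 : ℝ) 2, (x : ℂ) = z ^ m }

open Set Real intervalIntegral
open scoped NNReal ENNReal

lemma zeta_pow (m : ℕ) (hm : m ≠ 0) (k : ℕ) :
    Complex.exp (Real.pi * (k : ℂ) * Complex.I / (m : ℂ)) =
      Complex.exp (2 * Real.pi * Complex.I / ((2 * m : ℕ) : ℂ)) ^ k := by
  rw [← Complex.exp_nat_mul]
  congr 1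
  have hm' : (m : ℂ) ≠ 0 := Nat.cast_ne_zero.2 hm
  push_cast
  field_simp

lemma nat_mod_inj {n j k : ℕ} (hj1 : 1 ≤ j) (hj2 : j ≤ n) (hk1 : 1 ≤ k) (hk2 : k ≤ n)
    (h : j % n = k % n) : j = k := by
  rcases eq_or_lt_of_le hj2 with rfl | hj
  · rcases eq_or_lt_of_le hk2 with rfl | hk
    · rfl
    · rw [Nat.mod_self, Nat.mod_eq_of_lt hk] at h; omega
  · rcases eq_or_lt_of_le hk2 with rfl | hk
    · rw [Nat.mod_self, Nat.mod_eq_of_lt hj] at h; omega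
    · rw [Nat.mod_eq_of_lt hj, Nat.mod_eq_of_lt hk] at h; exact h

lemma prod_ident (m : ℕ) (hm : 1 ≤ m) (x y : ℂ) :
    ∏ k ∈ Finset.Icc 1 (2 * m), (x - Complex.exp (Real.pi * (k : ℂ) * Complex.I / (m : ℂ)) * y)
      = x ^ (2 * m) - y ^ (2 * m) := by
  have hn : (2 * m) ≠ 0 := by omega
  have hpos : 0 < 2 * m := by omega
  set ζ := Complex.exp (2 * Real.pi * Complex.I / ((2 * m : ℕ) : ℂ)) with hζ
  have hprim : IsPrimitiveRoot ζ (2 * m) := Complex.isPrimitiveRoot_exp _ hn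
  have hζpow : ζ ^ (2 * m) = 1 := hprim.pow_eq_one
  rw [hprim.pow_sub_pow_eq_prod_sub_mul x y hpos]
  refine Finset.prod_bij (fun k _ => ζ ^ k) ?_ ?_ ?_ ?_
  · intro k hk
    rw [Polynomial.mem_nthRootsFinset hpos, ← pow_mul, mul_comm k, pow_mul, hζpow, one_pow]
  · intro j hj k hk h
    simp only [Finset.mem_Icc] at hj hk
    have h0 : ζ ^ j = ζ ^ k := h
    have h' : ζ ^ (j % (2 * m)) = ζ ^ (k % (2 * m)) := by
      rw [← pow_eq_pow_mod j hζpow, ← pow_eq_pow_mod k hζpow, h0]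
    exact nat_mod_inj hj.1 hj.2 hk.1 hk.2
      (hprim.pow_inj (Nat.mod_lt _ hpos) (Nat.mod_lt _ hpos) h')
  · intro ξ hξ
    rw [Polynomial.mem_nthRootsFinset hpos] at hξ
    have : NeZero (2 * m) := ⟨hn⟩
    obtain ⟨i, hi, hi'⟩ := hprim.eq_pow_of_pow_eq_one hξ
    rcases Nat.eq_zero_or_pos i with rfl | hipos
    · exact ⟨2 * m, Finset.mem_Icc.2 ⟨by omega, le_rfl⟩, by
        show ζ ^ (2 * m) = ξ; rw [hζpow, ← hi', pow_zero]⟩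
    · exact ⟨i, Finset.mem_Icc.2 ⟨hipos, hi.le⟩, hi'⟩
  · intro k hk
    rw [zeta_pow m (by omega) k]

/-- `|x|^r` is interval integrable for `r > -1`. -/
lemma intervalIntegrable_abs_rpow {r : ℝ} (hr : -1 < r) (a b : ℝ) :
    IntervalIntegrable (fun x => |x| ^ r) volume a b := by
  suffices h : ∀ c : ℝ, IntervalIntegrable (fun x => |x| ^ r) volume 0 c by
    exact (h a).symm.trans (h b)
  intro c
  rcases le_or_gt 0 c with hc | hc
  · refine (intervalIntegrable_rpow' hr (a := 0) (b := c)).congr ?_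
    rw [uIoc_of_le hc]
    intro x hx; dsimp only
    rw [abs_of_nonneg hx.1.le]
  · have h1 : IntervalIntegrable (fun x : ℝ => (-x) ^ r) volume c 0 := by
      have := (IntervalIntegrable.iff_comp_neg (f := fun x : ℝ => x ^ r) (a := -c) (b := -0)).1 (intervalIntegrable_rpow' hr (a := -c) (b := -0))
      simpa using this
    refine h1.symm.congr ?_
    rw [uIoc_of_ge hc.le]
    intro x hx; dsimp only
    rw [abs_of_nonpos hx.2]

lemma integrableOn_abs_sub_rpow {r : ℝ} (hr : -1 < r) (a b c : ℝ) :
    IntegrableOn (fun t => |t - a| ^ r) (Ioo b c) volume := by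
  have h := (intervalIntegrable_abs_rpow hr (b - a) (c - a)).comp_sub_right a
  have h2 := h.def'
  simp only [sub_add_cancel] at h2
  rcases le_or_gt b c with hbc | hbc
  · refine h2.mono_set ?_
    rw [uIoc_of_le hbc]
    exact Ioo_subset_Ioc_self
  · simp [Ioo_eq_empty_of_le hbc.le]

/-- Baby Young: `x * y ≤ x^3 + y^(3/2)` for nonnegative reals (rpow form). -/
lemma young_aux {x y : ℝ} (hx : 0 ≤ x) (hy : 0 ≤ y) :
    x * y ≤ x ^ (3 : ℝ) + y ^ ((3 : ℝ) / 2) := by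
  have h32 : y ^ ((3:ℝ)/2) = y ^ ((1:ℝ)/2) * y := by
    rw [show (3:ℝ)/2 = 1/2 + 1 by norm_num, Real.rpow_add' hy (by norm_num), Real.rpow_one]
  have h3 : x ^ (3:ℝ) = x * x ^ (2:ℝ) := by
    rw [show (3:ℝ) = 1 + 2 by norm_num, Real.rpow_add' hx (by norm_num), Real.rpow_one]
  rcases le_or_gt x (y ^ ((1 : ℝ) / 2)) with h | h
  · calc x * y ≤ y ^ ((1:ℝ)/2) * y := mul_le_mul_of_nonneg_right h hy
      _ = y ^ ((3:ℝ)/2) := h32.symm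
      _ ≤ _ := le_add_of_nonneg_left (Real.rpow_nonneg hx _)
  · have h2 : y < x ^ (2:ℝ) := by
      have := Real.rpow_lt_rpow (Real.rpow_nonneg hy _) h (by norm_num : (0:ℝ) < 2)
      rwa [← Real.rpow_mul hy, show (1:ℝ)/2*2 = 1 by norm_num, Real.rpow_one] at this
    calc x * y ≤ x * x ^ (2:ℝ) := mul_le_mul_of_nonneg_left h2.le hx
      _ = x ^ (3:ℝ) := h3.symm
      _ ≤ _ := le_add_of_nonneg_right (Real.rpow_nonneg hy _)

/-- Master integrability lemma. -/
lemma master_integrable {R : ℝ} (a K C : ℝ) (hK : 0 ≤ K) (hC : 0 ≤ C) {f : ℝ → ℝ}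
    (hmeas : AEStronglyMeasurable f (volume.restrict (Ioo 0 R)))
    (hb : ∀ᵐ t ∂(volume.restrict (Ioo 0 R)),
      |f t| ≤ (K + 4 * |t - a| ^ (-(4:ℝ)⁻¹)) * (C * (R - t) ^ (-(2:ℝ)⁻¹))) :
    IntegrableOn f (Ioo 0 R) volume := by
  have hHint : IntegrableOn (fun t =>
      K * C * |t - R| ^ (-(2:ℝ)⁻¹) + 4 * C * |t - a| ^ (-(4:ℝ)⁻¹ * 3)
        + 4 * C * |t - R| ^ (-(2:ℝ)⁻¹ * (3/2))) (Ioo 0 R) volume :=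
    (((integrableOn_abs_sub_rpow (by norm_num) R 0 R).const_mul (K*C)).add
      ((integrableOn_abs_sub_rpow (by norm_num) a 0 R).const_mul (4*C))).add
      ((integrableOn_abs_sub_rpow (by norm_num) R 0 R).const_mul (4*C))
  refine Integrable.mono' hHint hmeas ?_
  filter_upwards [hb, ae_restrict_mem measurableSet_Ioo] with t hbt ht
  refine hbt.trans ?_
  have hRt : 0 < R - t := by linarith [ht.2]
  have habs : |t - R| = R - t := by rw [abs_sub_comm]; exact abs_of_pos hRt
  have hx : (0:ℝ) ≤ |t - a| ^ (-(4:ℝ)⁻¹) := Real.rpow_nonneg (abs_nonneg _) _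
  have hy : (0:ℝ) ≤ (R - t) ^ (-(2:ℝ)⁻¹) := Real.rpow_nonneg hRt.le _
  have key : |t - a| ^ (-(4:ℝ)⁻¹) * (R - t) ^ (-(2:ℝ)⁻¹)
      ≤ |t - a| ^ (-(4:ℝ)⁻¹ * 3) + (R - t) ^ (-(2:ℝ)⁻¹ * (3/2)) := by
    have h := young_aux hx hy
    rwa [← Real.rpow_mul (abs_nonneg _), ← Real.rpow_mul hRt.le] at h
  have h2 : 4 * C * (|t - a| ^ (-(4:ℝ)⁻¹) * (R - t) ^ (-(2:ℝ)⁻¹))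
      ≤ 4 * C * (|t - a| ^ (-(4:ℝ)⁻¹ * 3) + (R - t) ^ (-(2:ℝ)⁻¹ * (3/2))) :=
    mul_le_mul_of_nonneg_left key (by positivity)
  have expand : (K + 4 * |t - a| ^ (-(4:ℝ)⁻¹)) * (C * (R - t) ^ (-(2:ℝ)⁻¹))
      = K * C * (R - t) ^ (-(2:ℝ)⁻¹)
        + 4 * C * (|t - a| ^ (-(4:ℝ)⁻¹) * (R - t) ^ (-(2:ℝ)⁻¹)) := by ring
  show _ ≤ K * C * |t - R| ^ (-(2:ℝ)⁻¹) + 4 * C * |t - a| ^ (-(4:ℝ)⁻¹ * 3)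
        + 4 * C * |t - R| ^ (-(2:ℝ)⁻¹ * (3/2))
  rw [habs, expand]
  linarith

lemma abs_log_le {x : ℝ} (hx : 0 < x) :
    |Real.log x| ≤ 4 * x ^ ((4:ℝ)⁻¹) + 4 * x ^ (-(4:ℝ)⁻¹) := by
  have h4 : ∀ y : ℝ, Real.log (x ^ y) = y * Real.log x := fun y => Real.log_rpow hx y
  rcases le_or_gt 1 x with h | h
  · rw [abs_of_nonneg (Real.log_nonneg h)]
    have h1 : Real.log (x ^ ((4:ℝ)⁻¹)) ≤ x ^ ((4:ℝ)⁻¹) :=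
      (Real.log_le_sub_one_of_pos (Real.rpow_pos_of_pos hx _)).trans (by linarith)
    rw [h4] at h1
    have h2 : (0:ℝ) ≤ 4 * x ^ (-(4:ℝ)⁻¹) := by positivity
    nlinarith
  · rw [abs_of_nonpos (Real.log_nonpos hx.le h.le)]
    have h1 : Real.log (x ^ (-(4:ℝ)⁻¹)) ≤ x ^ (-(4:ℝ)⁻¹) :=
      (Real.log_le_sub_one_of_pos (Real.rpow_pos_of_pos hx _)).trans (by linarith)
    rw [h4] at h1
    have h2 : (0:ℝ) ≤ 4 * x ^ ((4:ℝ)⁻¹) := by positivity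
    nlinarith

/-- bound for `|log |c t - z||` with `|c| = 1`, `0 ≤ t ≤ B`, `t ≠ (c⁻¹ z).re`. -/
lemma log_dist_bound {c z : ℂ} (hc : ‖c‖ = 1) {t B : ℝ}
    (ht0 : 0 ≤ t) (htB : t ≤ B) (hta : t ≠ (c⁻¹ * z).re) :
    |Real.log (‖c * t - z‖)|
      ≤ 4 * (B + ‖z‖ + 1) ^ ((4:ℝ)⁻¹) + 4 * |t - (c⁻¹ * z).re| ^ (-(4:ℝ)⁻¹) := by
  set w := c⁻¹ * z with hw
  have hc0 : c ≠ 0 := by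
    intro h; rw [h] at hc; simp at hc
  have hD : ‖c * t - z‖ = ‖(t : ℂ) - w‖ := by
    have : c * t - z = c * ((t : ℂ) - w) := by
      field_simp [hw]
      rw [hw, mul_sub, ← mul_assoc, mul_inv_cancel₀ hc0, one_mul]
    rw [this, norm_mul, hc, one_mul]
  have hlow : |t - w.re| ≤ ‖(t:ℂ) - w‖ := by
    have := Complex.abs_re_le_norm ((t:ℂ) - w)
    simpa using this
  have hta' : 0 < |t - w.re| := abs_pos.2 (sub_ne_zero.2 hta)
  have hD0 : 0 < ‖(t:ℂ) - w‖ := lt_of_lt_of_le hta' hlow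
  have hup : ‖(t:ℂ) - w‖ ≤ B + ‖z‖ + 1 := by
    have h1 : ‖(t:ℂ) - w‖ = ‖c * t - z‖ := hD.symm
    have h2 : ‖c * t - z‖ ≤ ‖c * t‖ + ‖z‖ :=
      (norm_sub_le _ _)
    have h3 : ‖c * (t:ℂ)‖ = |t| := by
      rw [norm_mul, hc, one_mul, Complex.norm_real, Real.norm_eq_abs]
    rw [h1]
    rw [h3] at h2
    rw [abs_of_nonneg ht0] at h2
    linarith
  rw [hD]
  refine (abs_log_le hD0).trans ?_
  have e1 : ‖(t:ℂ) - w‖ ^ ((4:ℝ)⁻¹) ≤ (B + ‖z‖ + 1) ^ ((4:ℝ)⁻¹) :=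
    Real.rpow_le_rpow hD0.le hup (by norm_num)
  have e2 : ‖(t:ℂ) - w‖ ^ (-(4:ℝ)⁻¹) ≤ |t - w.re| ^ (-(4:ℝ)⁻¹) := by
    rw [Real.rpow_neg hD0.le, Real.rpow_neg hta'.le]
    exact inv_anti₀ (Real.rpow_pos_of_pos hta' _) (Real.rpow_le_rpow hta'.le hlow (by norm_num))
  have h2 : (0:ℝ) < 4 := by norm_num
  nlinarith

/-- `R^m = 2` for `R = 2^(1/m)`. -/
lemma R_pow (m : ℕ) (hm : 1 ≤ m) : ((2:ℝ) ^ ((1:ℝ)/(m:ℝ))) ^ m = 2 := by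
  have hm0 : (m:ℝ) ≠ 0 := Nat.cast_ne_zero.2 (by omega)
  rw [← Real.rpow_natCast ((2:ℝ) ^ ((1:ℝ)/(m:ℝ))) m, ← Real.rpow_mul (by norm_num)]
  rw [one_div, inv_mul_cancel₀ hm0, Real.rpow_one]

lemma R_one_le (m : ℕ) : 1 ≤ (2:ℝ) ^ ((1:ℝ)/(m:ℝ)) := by
  exact Real.one_le_rpow (by norm_num) (by positivity)

/-- the density is dominated by `C (R-t)^{-1/2}` on `(0, R)`. -/
lemma rho_le (m : ℕ) (hm : 1 ≤ m) {t : ℝ}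
    (ht : t ∈ Ioo 0 ((2:ℝ) ^ ((1:ℝ)/(m:ℝ)))) :
    t ^ (m - 1) / (Real.pi * Real.sqrt (4 - t ^ (2 * m)))
      ≤ (((2:ℝ) ^ ((1:ℝ)/(m:ℝ))) ^ (m-1) / (Real.pi * Real.sqrt 2))
          * (((2:ℝ) ^ ((1:ℝ)/(m:ℝ))) - t) ^ (-(2:ℝ)⁻¹) := by
  set R := (2:ℝ) ^ ((1:ℝ)/(m:ℝ)) with hR
  have hR1 : 1 ≤ R := R_one_le m
  have hRm : R ^ m = 2 := R_pow m hm
  have ht0 : 0 < t := ht.1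
  have htR : t < R := ht.2
  have hRt : 0 < R - t := by linarith
  have hs2 : t ^ m ≤ 2 := by
    rw [← hRm]; exact pow_le_pow_left₀ ht0.le htR.le m
  have hsum : (1:ℝ) ≤ ∑ i ∈ Finset.range m, R ^ i * t ^ (m - 1 - i) := by
    have hmem : m - 1 ∈ Finset.range m := Finset.mem_range.2 (by omega)
    have hterm : (1:ℝ) ≤ R ^ (m-1) * t ^ (m - 1 - (m-1)) := by
      rw [Nat.sub_self, pow_zero, mul_one]
      exact one_le_pow₀ hR1
    refine hterm.trans (Finset.single_le_sum (f := fun i => R ^ i * t ^ (m - 1 - i))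
      (fun i _ => by positivity) hmem)
  have hsub : R - t ≤ R ^ m - t ^ m := by
    have := geom_sum₂_mul R t m
    nlinarith [hsum, hRt.le]
  have h2m : t ^ (2 * m) = (t ^ m) ^ 2 := by rw [mul_comm, pow_mul]
  have h4 : 2 * (R - t) ≤ 4 - t ^ (2*m) := by
    rw [h2m]
    nlinarith [pow_nonneg ht0.le m]
  have hsqrt : Real.sqrt 2 * Real.sqrt (R - t) ≤ Real.sqrt (4 - t ^ (2*m)) := by
    rw [← Real.sqrt_mul (by norm_num)]
    exact Real.sqrt_le_sqrt h4
  have hnum : t ^ (m-1) ≤ R ^ (m-1) := pow_le_pow_left₀ ht0.le htR.le _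
  have hden : 0 < Real.pi * (Real.sqrt 2 * Real.sqrt (R - t)) := by positivity
  have hfrac : t ^ (m - 1) / (Real.pi * Real.sqrt (4 - t ^ (2 * m)))
      ≤ R ^ (m-1) / (Real.pi * (Real.sqrt 2 * Real.sqrt (R - t))) := by
    refine div_le_div₀ (by positivity) hnum hden ?_
    have := mul_le_mul_of_nonneg_left hsqrt Real.pi_pos.le
    linarith
  refine hfrac.trans_eq ?_
  rw [Real.rpow_neg hRt.le, show ((2:ℝ)⁻¹) = 1/2 by norm_num, ← Real.sqrt_eq_rpow]
  have hs : Real.sqrt (R - t) ≠ 0 := by positivity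
  field_simp

lemma rho_measurable (m : ℕ) :
    Measurable fun t : ℝ => t ^ (m - 1) / (Real.pi * Real.sqrt (4 - t ^ (2 * m))) := by
  exact (measurable_id.pow_const (m-1)).div
    (measurable_const.mul (Real.continuous_sqrt.measurable.comp
      (measurable_const.sub (measurable_id.pow_const (2*m)))))

lemma rho_nonneg (m : ℕ) {t : ℝ} (ht : 0 ≤ t) :
    0 ≤ t ^ (m - 1) / (Real.pi * Real.sqrt (4 - t ^ (2 * m))) := by
  apply div_nonneg (pow_nonneg ht _)
  positivity

/-- Integral against `lamMeas` as a weighted Lebesgue integral on `(0,R)`. -/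
lemma lam_integral (m : ℕ) (f : ℝ → ℝ) :
    ∫ t, f t ∂(lamMeas m)
      = ∫ t in Ioo (0:ℝ) ((2:ℝ) ^ ((1:ℝ)/(m:ℝ))),
          f t * (t ^ (m - 1) / (Real.pi * Real.sqrt (4 - t ^ (2 * m)))) := by
  set R := (2:ℝ) ^ ((1:ℝ)/(m:ℝ))
  set ρ := fun t : ℝ => t ^ (m - 1) / (Real.pi * Real.sqrt (4 - t ^ (2 * m))) with hρ
  have hmeas : Measurable fun t => Real.toNNReal (ρ t) := (rho_measurable m).real_toNNReal
  have : lamMeas m = (volume.restrict (Icc (0:ℝ) R)).withDensity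
      (fun t => ((Real.toNNReal (ρ t) : ℝ≥0) : ENNReal)) := rfl
  rw [this, integral_withDensity_eq_integral_smul hmeas f]
  rw [integral_Icc_eq_integral_Ioo]
  refine setIntegral_congr_fun measurableSet_Ioo (fun t ht => ?_)
  have h0 : 0 ≤ ρ t := rho_nonneg m ht.1.le
  rw [NNReal.smul_def, Real.coe_toNNReal _ h0, mul_comm]
  rw [smul_eq_mul]


/-- Integrability for `lamMeas` from a weighted bound on `(0,R)`. -/
lemma lam_integrable (m : ℕ) (f : ℝ → ℝ)
    (h : IntegrableOn (fun t => f t * (t ^ (m - 1) / (Real.pi * Real.sqrt (4 - t ^ (2 * m)))))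
      (Ioo (0:ℝ) ((2:ℝ) ^ ((1:ℝ)/(m:ℝ)))) volume) :
    Integrable f (lamMeas m) := by
  set R := (2:ℝ) ^ ((1:ℝ)/(m:ℝ))
  set ρ := fun t : ℝ => t ^ (m - 1) / (Real.pi * Real.sqrt (4 - t ^ (2 * m))) with hρ
  rw [lamMeas, integrable_withDensity_iff ((rho_measurable m).ennreal_ofReal)
    (Filter.Eventually.of_forall fun _ => ENNReal.ofReal_lt_top)]
  have : IntegrableOn (fun t => f t * (ENNReal.ofReal (ρ t)).toReal) (Icc 0 R) volume := by
    rw [integrableOn_Icc_iff_integrableOn_Ioo]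
    refine h.congr_fun (fun t ht => ?_) measurableSet_Ioo
    rw [ENNReal.toReal_ofReal (rho_nonneg m ht.1.le)]
  exact this

lemma rpow_one_div_pow {x : ℝ} (hx : 0 ≤ x) {m : ℕ} (hm : 1 ≤ m) :
    (x ^ ((1:ℝ)/(m:ℝ))) ^ m = x := by
  have hm0 : (m:ℝ) ≠ 0 := Nat.cast_ne_zero.2 (by omega)
  rw [← Real.rpow_natCast (x ^ ((1:ℝ)/(m:ℝ))) m, ← Real.rpow_mul hx]
  rw [one_div, inv_mul_cancel₀ hm0, Real.rpow_one]

lemma pow_image (m : ℕ) (hm : 1 ≤ m) :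
    (fun t : ℝ => t ^ m) '' Ioo 0 ((2:ℝ) ^ ((1:ℝ)/(m:ℝ))) = Ioo (0:ℝ) 2 := by
  have hm0 : m ≠ 0 := by omega
  ext u
  constructor
  · rintro ⟨t, ht, rfl⟩
    refine ⟨pow_pos ht.1 m, ?_⟩
    calc t ^ m < ((2:ℝ) ^ ((1:ℝ)/(m:ℝ))) ^ m := pow_lt_pow_left₀ ht.2 ht.1.le hm0
      _ = 2 := rpow_one_div_pow (by norm_num) hm
  · intro hu
    refine ⟨u ^ ((1:ℝ)/(m:ℝ)), ⟨Real.rpow_pos_of_pos hu.1 _, ?_⟩, rpow_one_div_pow hu.1.le hm⟩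
    exact Real.rpow_lt_rpow hu.1.le hu.2 (by positivity)

/-- Change of variables `u = t^m` for arbitrary integrand. -/
lemma cov_pow (m : ℕ) (hm : 1 ≤ m) (g : ℝ → ℝ) :
    ∫ u in Ioo (0:ℝ) 2, g u
      = ∫ t in Ioo (0:ℝ) ((2:ℝ) ^ ((1:ℝ)/(m:ℝ))), ((m:ℝ) * t ^ (m-1)) * g (t ^ m) := by
  have hd : ∀ t ∈ Ioo (0:ℝ) ((2:ℝ) ^ ((1:ℝ)/(m:ℝ))),
      HasDerivWithinAt (fun x : ℝ => x ^ m) ((m:ℝ) * t ^ (m-1)) (Ioo 0 ((2:ℝ) ^ ((1:ℝ)/(m:ℝ)))) t :=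
    fun t _ => (hasDerivAt_pow m t).hasDerivWithinAt
  have hinj : InjOn (fun t : ℝ => t ^ m) (Ioo 0 ((2:ℝ) ^ ((1:ℝ)/(m:ℝ)))) := by
    refine (pow_left_strictMonoOn₀ (by omega)).injOn.mono ?_
    intro x hx; exact hx.1.le
  have := integral_image_eq_integral_abs_deriv_smul measurableSet_Ioo hd hinj g
  rw [pow_image m hm] at this
  rw [this]
  refine setIntegral_congr_fun measurableSet_Ioo (fun t ht => ?_)
  rw [smul_eq_mul, abs_of_nonneg (mul_nonneg (Nat.cast_nonneg m) (pow_nonneg ht.1.le _))]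

/-- `∫_0^2 du/√(4-u²) = π/2`. -/
lemma int_inv_sqrt : ∫ u in Ioo (0:ℝ) 2, (Real.sqrt (4 - u^2))⁻¹ = Real.pi / 2 := by
  have hsub : Ioo 0 (Real.pi/2) ⊆ Icc (-(Real.pi/2)) (Real.pi/2) :=
    fun x hx => ⟨by linarith [hx.1, Real.pi_pos], hx.2.le⟩
  have hd : ∀ θ ∈ Ioo (0:ℝ) (Real.pi/2),
      HasDerivWithinAt (fun x : ℝ => 2 * Real.sin x) (2 * Real.cos θ) (Ioo 0 (Real.pi/2)) θ :=
    fun θ _ => ((Real.hasDerivAt_sin θ).const_mul 2).hasDerivWithinAt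
  have hinj : InjOn (fun θ : ℝ => 2 * Real.sin θ) (Ioo 0 (Real.pi/2)) := by
    intro x hx y hy h
    have h' : 2 * Real.sin x = 2 * Real.sin y := h
    have : Real.sin x = Real.sin y := by linarith
    exact Real.strictMonoOn_sin.injOn (hsub hx) (hsub hy) this
  have himg : (fun θ : ℝ => 2 * Real.sin θ) '' Ioo 0 (Real.pi/2) = Ioo (0:ℝ) 2 := by
    ext u
    constructor
    · rintro ⟨θ, hθ, rfl⟩
      show 2 * Real.sin θ ∈ Ioo (0:ℝ) 2
      have h1 : 0 < Real.sin θ := Real.sin_pos_of_pos_of_lt_pi hθ.1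
        (hθ.2.trans (by linarith [Real.pi_pos]))
      have h2 : Real.sin θ < 1 := by
        have := Real.strictMonoOn_sin (hsub hθ)
          ⟨by linarith [Real.pi_pos], le_rfl⟩ hθ.2
        rwa [Real.sin_pi_div_two] at this
      exact ⟨by linarith, by linarith⟩
    · intro hu
      obtain ⟨hu1, hu2⟩ := hu
      refine ⟨Real.arcsin (u/2), ⟨Real.arcsin_pos.2 (by linarith), ?_⟩, ?_⟩
      · exact Real.arcsin_lt_pi_div_two.2 (by linarith)
      · show 2 * Real.sin (Real.arcsin (u/2)) = u
        rw [Real.sin_arcsin (by linarith) (by linarith)]; ring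
  have := integral_image_eq_integral_abs_deriv_smul measurableSet_Ioo hd hinj
    (fun u => (Real.sqrt (4 - u^2))⁻¹)
  rw [himg] at this
  rw [this]
  have : ∀ θ ∈ Ioo (0:ℝ) (Real.pi/2),
      |2 * Real.cos θ| • (Real.sqrt (4 - (2 * Real.sin θ)^2))⁻¹ = 1 := by
    intro θ hθ
    have hc : 0 < Real.cos θ := Real.cos_pos_of_mem_Ioo
      ⟨by linarith [hθ.1, Real.pi_pos], hθ.2⟩
    have h4 : 4 - (2 * Real.sin θ)^2 = (2 * Real.cos θ)^2 := by
      nlinarith [Real.sin_sq_add_cos_sq θ]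
    rw [h4, Real.sqrt_sq_eq_abs, smul_eq_mul, abs_of_pos (by linarith), mul_inv_cancel₀ (by linarith)]
  rw [setIntegral_congr_fun measurableSet_Ioo this]
  simp [Real.volume_Ioo, ENNReal.toReal_ofReal (by positivity : (0:ℝ) ≤ Real.pi/2)]
  positivity

lemma sqrt_pos_on (m : ℕ) (hm : 1 ≤ m) {t : ℝ} (ht : t ∈ Ioo 0 ((2:ℝ) ^ ((1:ℝ)/(m:ℝ)))) :
    0 < Real.sqrt (4 - t ^ (2*m)) := by
  have h1 : t ^ m < 2 := by
    calc t ^ m < ((2:ℝ) ^ ((1:ℝ)/(m:ℝ))) ^ m := pow_lt_pow_left₀ ht.2 ht.1.le (by omega)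
      _ = 2 := rpow_one_div_pow (by norm_num) hm
  have h0 : 0 < t ^ m := pow_pos ht.1 m
  have h2m : t ^ (2 * m) = (t ^ m) ^ 2 := by rw [mul_comm, pow_mul]
  refine Real.sqrt_pos.2 ?_
  rw [h2m]; nlinarith

/-- The key change of variables: `∫ F(t^m) dλ_m = ∫_{(0,2)} F(u)/(mπ√(4-u²)) du`. -/
lemma key_cov (m : ℕ) (hm : 1 ≤ m) (F : ℝ → ℝ) :
    ∫ t, F (t ^ m) ∂(lamMeas m)
      = ∫ u in Ioo (0:ℝ) 2, F u / ((m:ℝ) * Real.pi * Real.sqrt (4 - u^2)) := by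
  rw [lam_integral m (fun t => F (t ^ m)),
    cov_pow m hm (fun u => F u / ((m:ℝ) * Real.pi * Real.sqrt (4 - u^2)))]
  refine setIntegral_congr_fun measurableSet_Ioo (fun t ht => ?_) |>.symm
  have hs : 0 < Real.sqrt (4 - t ^ (2*m)) := sqrt_pos_on m hm ht
  have h2m : (t ^ m)^2 = t ^ (2 * m) := by rw [mul_comm, pow_mul]
  have hm0 : ((m:ℝ)) ≠ 0 := Nat.cast_ne_zero.2 (by omega)
  rw [h2m]
  field_simp

/-- Integrability of `t ↦ log |c t - z|` against `λ_m`, for `|c| = 1`. -/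
lemma integrable_log_lam (m : ℕ) (hm : 1 ≤ m) (c z : ℂ) (hc : ‖c‖ = 1) :
    Integrable (fun t : ℝ => Real.log (‖c * t - z‖)) (lamMeas m) := by
  set R := (2:ℝ) ^ ((1:ℝ)/(m:ℝ)) with hRdef
  apply lam_integrable
  set a := (c⁻¹ * z).re with ha
  refine master_integrable a (4 * (R + ‖z‖ + 1) ^ ((4:ℝ)⁻¹))
    (R ^ (m-1) / (Real.pi * Real.sqrt 2)) (by positivity) (by positivity) ?_ ?_
  · have h1 : Measurable fun t : ℝ => Real.log (‖c * t - z‖) :=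
      Real.measurable_log.comp (continuous_norm.comp
        ((continuous_const.mul Complex.continuous_ofReal).sub continuous_const)).measurable
    exact (h1.mul (rho_measurable m)).aestronglyMeasurable
  · have hne : ∀ᵐ t ∂(volume.restrict (Ioo 0 R)), t ≠ a := by
      rw [ae_iff]
      have hset : {t : ℝ | ¬ t ≠ a} = {a} := by ext x; simp
      rw [hset, Measure.restrict_apply (measurableSet_singleton a)]
      exact measure_mono_null inter_subset_left Real.volume_singleton
    filter_upwards [hne, ae_restrict_mem measurableSet_Ioo] with t hta ht
    have hρ0 : 0 ≤ t ^ (m - 1) / (Real.pi * Real.sqrt (4 - t ^ (2 * m))) :=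
      rho_nonneg m ht.1.le
    rw [abs_mul, abs_of_nonneg hρ0]
    exact mul_le_mul (log_dist_bound hc ht.1.le ht.2.le hta) (rho_le m hm ht) hρ0 (by positivity)

/-- Specialization: bound for `log |u - w|`. -/
lemma log_abs_sub_bound (w : ℂ) {u B : ℝ} (hu0 : 0 ≤ u) (huB : u ≤ B) (hne : u ≠ w.re) :
    |Real.log (‖(u:ℂ) - w‖)|
      ≤ 4 * (B + ‖w‖ + 1) ^ ((4:ℝ)⁻¹) + 4 * |u - w.re| ^ (-(4:ℝ)⁻¹) := by
  have := log_dist_bound (c := 1) (z := w) (by simp) hu0 huB (by simpa using hne)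
  simpa using this

/-- Integrability of `u ↦ log|u - w|/√(4-u²)` on `(0,2)`. -/
lemma integrable_log_sqrt (w : ℂ) :
    IntegrableOn (fun u : ℝ => Real.log (‖(u:ℂ) - w‖) / Real.sqrt (4 - u^2))
      (Ioo (0:ℝ) 2) volume := by
  refine master_integrable (R := 2) w.re (4 * (2 + ‖w‖ + 1) ^ ((4:ℝ)⁻¹))
    ((Real.sqrt 2)⁻¹) (by positivity) (by positivity) ?_ ?_
  · have h1 : Measurable fun u : ℝ => Real.log (‖(u:ℂ) - w‖) :=
      Real.measurable_log.comp (continuous_norm.comp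
        (Complex.continuous_ofReal.sub continuous_const)).measurable
    exact (h1.div (measurable_const.sub (measurable_id.pow_const 2)).sqrt).aestronglyMeasurable
  · have hne : ∀ᵐ u ∂(volume.restrict (Ioo (0:ℝ) 2)), u ≠ w.re := by
      rw [ae_iff]
      have hset : {u : ℝ | ¬ u ≠ w.re} = {w.re} := by ext x; simp
      rw [hset, Measure.restrict_apply (measurableSet_singleton _)]
      exact measure_mono_null inter_subset_left Real.volume_singleton
    filter_upwards [hne, ae_restrict_mem measurableSet_Ioo] with u hua hu
    have hsq : Real.sqrt 2 * Real.sqrt (2 - u) ≤ Real.sqrt (4 - u^2) := by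
      rw [← Real.sqrt_mul (by norm_num)]
      refine Real.sqrt_le_sqrt (by nlinarith [hu.1, hu.2])
    have hsqpos : 0 < Real.sqrt (2 - u) := Real.sqrt_pos.2 (by linarith [hu.2])
    have hinv : (Real.sqrt (4 - u^2))⁻¹ ≤ (Real.sqrt 2)⁻¹ * (2 - u) ^ (-(2:ℝ)⁻¹) := by
      rw [Real.rpow_neg (by linarith [hu.2]), show ((2:ℝ)⁻¹) = 1/2 by norm_num,
        ← Real.sqrt_eq_rpow]
      rw [← mul_inv]
      exact inv_anti₀ (by positivity) hsq
    have hinv0 : 0 ≤ (Real.sqrt (4 - u^2))⁻¹ := by positivity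
    rw [abs_div, div_eq_mul_inv, abs_of_nonneg (Real.sqrt_nonneg _)]
    exact mul_le_mul (log_abs_sub_bound w hu.1.le hu.2.le hua) hinv hinv0 (by positivity)

/-- Total mass of `λ_m` is `1/(2m)`. -/
lemma lam_univ (m : ℕ) (hm : 1 ≤ m) :
    lamMeas m Set.univ = ENNReal.ofReal (1 / (2 * (m:ℝ))) := by
  set R := (2:ℝ) ^ ((1:ℝ)/(m:ℝ)) with hRdef
  set ρ := fun t : ℝ => t ^ (m - 1) / (Real.pi * Real.sqrt (4 - t ^ (2 * m))) with hρ
  have hρint : IntegrableOn ρ (Icc (0:ℝ) R) volume := by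
    rw [integrableOn_Icc_iff_integrableOn_Ioo]
    refine master_integrable 0 1 (R ^ (m-1) / (Real.pi * Real.sqrt 2)) one_pos.le
      (by positivity) (rho_measurable m).aestronglyMeasurable ?_
    filter_upwards [ae_restrict_mem measurableSet_Ioo] with t ht
    rw [abs_of_nonneg (rho_nonneg m ht.1.le)]
    refine (rho_le m hm ht).trans ?_
    refine le_mul_of_one_le_left (mul_nonneg (by positivity)
      (Real.rpow_nonneg (by linarith [ht.2]) _)) ?_
    have h4 : (0:ℝ) ≤ 4 * |t - 0| ^ (-(4:ℝ)⁻¹) := by positivity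
    linarith
  have h0 : 0 ≤ᵐ[volume.restrict (Icc (0:ℝ) R)] ρ := by
    filter_upwards [ae_restrict_mem measurableSet_Icc] with t ht
    exact rho_nonneg m ht.1
  have hint : ∫ t in Icc (0:ℝ) R, ρ t = 1 / (2 * (m:ℝ)) := by
    rw [integral_Icc_eq_integral_Ioo]
    have hcongr : ∫ t in Ioo (0:ℝ) R, ρ t
        = ∫ t in Ioo (0:ℝ) R, ((m:ℝ) * t ^ (m-1)) *
            (fun u => (((m:ℝ) * Real.pi * Real.sqrt (4 - u^2)))⁻¹) (t ^ m) := by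
      refine setIntegral_congr_fun measurableSet_Ioo (fun t ht => ?_)
      have hs : 0 < Real.sqrt (4 - t ^ (2*m)) := sqrt_pos_on m hm ht
      have h2m : (t ^ m)^2 = t ^ (2 * m) := by rw [mul_comm, pow_mul]
      have hm0 : ((m:ℝ)) ≠ 0 := Nat.cast_ne_zero.2 (by omega)
      show ρ t = ((m:ℝ) * t ^ (m-1)) * (((m:ℝ) * Real.pi * Real.sqrt (4 - (t^m)^2)))⁻¹
      rw [h2m, hρ]
      field_simp
    rw [hcongr, ← cov_pow m hm (fun u => (((m:ℝ) * Real.pi * Real.sqrt (4 - u^2)))⁻¹)]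
    have hpt : ∀ u : ℝ, (((m:ℝ) * Real.pi * Real.sqrt (4 - u^2)))⁻¹
        = (1/((m:ℝ) * Real.pi)) * (Real.sqrt (4 - u^2))⁻¹ := by
      intro u
      rw [mul_inv, one_div]
    simp_rw [hpt]
    rw [MeasureTheory.integral_const_mul, int_inv_sqrt]
    have hm0 : ((m:ℝ)) ≠ 0 := Nat.cast_ne_zero.2 (by omega)
    field_simp
  rw [lamMeas, withDensity_apply _ MeasurableSet.univ, Measure.restrict_univ,
    ← ofReal_integral_eq_lintegral_ofReal hρint h0]
  rw [hint]

lemma lam_compl_Icc (m : ℕ) :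
    lamMeas m ((Icc (0:ℝ) ((2:ℝ) ^ ((1:ℝ)/(m:ℝ))))ᶜ) = 0 := by
  rw [lamMeas, withDensity_apply _ measurableSet_Icc.compl]
  refine setLIntegral_measure_zero _ _ ?_
  rw [Measure.restrict_apply measurableSet_Icc.compl]
  simp

lemma estar_closed (m : ℕ) : IsClosed (Estar m) := by
  have h : Estar m = (fun z : ℂ => z ^ m) ⁻¹' (Complex.ofReal '' Icc (-2 : ℝ) 2) := rfl
  rw [h]
  exact ((isCompact_Icc.image Complex.continuous_ofReal).isClosed).preimage (continuous_pow m)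

lemma mem_estar (m : ℕ) (hm : 1 ≤ m) (k : ℕ) {t : ℝ}
    (ht : t ∈ Icc (0:ℝ) ((2:ℝ) ^ ((1:ℝ)/(m:ℝ)))) :
    (Complex.exp (Real.pi * (k : ℂ) * Complex.I / (m : ℂ)) * (t : ℂ)) ∈ Estar m := by
  have hm0 : ((m:ℂ)) ≠ 0 := Nat.cast_ne_zero.2 (by omega)
  have htm2 : t ^ m ≤ 2 := by
    calc t ^ m ≤ ((2:ℝ) ^ ((1:ℝ)/(m:ℝ))) ^ m := pow_le_pow_left₀ ht.1 ht.2 m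
      _ = 2 := rpow_one_div_pow (by norm_num) hm
  have htm0 : 0 ≤ t ^ m := pow_nonneg ht.1 m
  have hexp : Complex.exp (Real.pi * (k : ℂ) * Complex.I / (m : ℂ)) ^ m = (-1:ℂ)^k := by
    rw [← Complex.exp_nat_mul]
    have harg : (m:ℂ) * (Real.pi * (k : ℂ) * Complex.I / (m : ℂ)) = (k:ℂ) * (Real.pi * Complex.I) := by
      field_simp
    rw [harg, Complex.exp_nat_mul, Complex.exp_pi_mul_I]
  refine ⟨(-1:ℝ)^k * t^m, ?_, ?_⟩
  · rcases Nat.even_or_odd k with hk | hk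
    · rw [hk.neg_one_pow]
      constructor <;> [linarith; linarith]
    · rw [hk.neg_one_pow]
      constructor <;> [linarith; linarith]
  · rw [mul_pow, hexp]
    push_cast
    ring

/-- The reflection/splitting identity for the logarithmic integral. -/
lemma split_log (w : ℂ) :
    ∫ u in Ioo (0:ℝ) 2, Real.log (‖((u:ℂ))^2 - w^2‖) / Real.sqrt (4 - u^2)
      = ∫ t in (-2:ℝ)..2, Real.log (‖(t:ℂ) - w‖) / Real.sqrt (4 - t^2) := by
  set f := fun t : ℝ => Real.log (‖(t:ℂ) - w‖) / Real.sqrt (4 - t^2) with hf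
  set g := fun t : ℝ => Real.log (‖(t:ℂ) + w‖) / Real.sqrt (4 - t^2) with hg
  have hIf : IntegrableOn f (Ioo (0:ℝ) 2) volume := integrable_log_sqrt w
  have hIg : IntegrableOn g (Ioo (0:ℝ) 2) volume := by
    have h := integrable_log_sqrt (-w)
    simpa [sub_neg_eq_add] using h
  have hgf : (fun x : ℝ => f (-x)) = g := by
    funext x
    show Real.log (‖((-x : ℝ):ℂ) - w‖) / Real.sqrt (4 - (-x)^2) = g x
    rw [neg_sq]
    congr 2
    rw [show (((-x : ℝ)):ℂ) - w = -(((x : ℝ):ℂ) + w) by push_cast; ring]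
    exact norm_neg _
  have hIIf02 : IntervalIntegrable f volume 0 2 := by
    rw [intervalIntegrable_iff_integrableOn_Ioo_of_le (by norm_num)]
    exact hIf
  have hIIg02 : IntervalIntegrable g volume 0 2 := by
    rw [intervalIntegrable_iff_integrableOn_Ioo_of_le (by norm_num)]
    exact hIg
  have hIIfneg : IntervalIntegrable f volume (-2) 0 := by
    have h2 := IntervalIntegrable.iff_comp_neg (f := f) (a := (-2:ℝ)) (b := (0:ℝ))
    simp only [neg_neg, neg_zero] at h2
    rw [h2, hgf]
    exact hIIg02.symm
  have hneg : ∫ t in (-2:ℝ)..0, f t = ∫ x in (0:ℝ)..2, g x := by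
    have h := integral_comp_neg (a := (0:ℝ)) (b := 2) f
    simp only [neg_zero] at h
    rw [← h, hgf]
  have h02f : ∫ t in (0:ℝ)..2, f t = ∫ t in Ioo (0:ℝ) 2, f t := by
    rw [integral_of_le (by norm_num), integral_Ioc_eq_integral_Ioo]
  have h02g : ∫ t in (0:ℝ)..2, g t = ∫ t in Ioo (0:ℝ) 2, g t := by
    rw [integral_of_le (by norm_num), integral_Ioc_eq_integral_Ioo]
  have hae : ∀ᵐ u ∂(volume.restrict (Ioo (0:ℝ) 2)),
      g u + f u = Real.log (‖((u:ℂ))^2 - w^2‖) / Real.sqrt (4 - u^2) := by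
    have hb1 : ∀ᵐ u ∂(volume.restrict (Ioo (0:ℝ) 2)), u ≠ w.re := by
      rw [ae_iff]
      have hset : {u : ℝ | ¬ u ≠ w.re} = {w.re} := by ext x; simp
      rw [hset, Measure.restrict_apply (measurableSet_singleton _)]
      exact measure_mono_null inter_subset_left Real.volume_singleton
    have hb2 : ∀ᵐ u ∂(volume.restrict (Ioo (0:ℝ) 2)), u ≠ (-w).re := by
      rw [ae_iff]
      have hset : {u : ℝ | ¬ u ≠ (-w).re} = {(-w).re} := by ext x; simp
      rw [hset, Measure.restrict_apply (measurableSet_singleton _)]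
      exact measure_mono_null inter_subset_left Real.volume_singleton
    filter_upwards [hb1, hb2] with u hu1 hu2
    have h1 : ((u:ℂ) - w) ≠ 0 := by
      intro h
      apply hu1
      have : (u:ℂ) = w := by linear_combination h
      rw [← this, Complex.ofReal_re]
    have h2 : ((u:ℂ) + w) ≠ 0 := by
      intro h
      apply hu2
      have : (u:ℂ) = -w := by linear_combination h
      rw [← this, Complex.ofReal_re]
    have hfac : ((u:ℂ))^2 - w^2 = ((u:ℂ) + w) * ((u:ℂ) - w) := by ring
    rw [hfac, norm_mul, Real.log_mul (norm_ne_zero_iff.mpr h2) (norm_ne_zero_iff.mpr h1), add_div]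
  calc ∫ u in Ioo (0:ℝ) 2, Real.log (‖((u:ℂ))^2 - w^2‖) / Real.sqrt (4 - u^2)
      = ∫ u in Ioo (0:ℝ) 2, (g u + f u) := (integral_congr_ae hae).symm
    _ = (∫ u in Ioo (0:ℝ) 2, g u) + ∫ u in Ioo (0:ℝ) 2, f u := integral_add hIg hIf
    _ = (∫ t in (-2:ℝ)..0, f t) + ∫ t in (0:ℝ)..2, f t := by rw [hneg, h02f, h02g]
    _ = ∫ t in (-2:ℝ)..2, f t := integral_add_adjacent_intervals hIIfneg hIIf02

/-- `ν_m` is the equilibrium measure of `E_m`: it is a probability measure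
supported on `E_m`, and its logarithmic potential equals
`(1/m) G_{[-2,2]}(z^m)`, i.e. `(1/(mπ)) ∫_{-2}^{2} log|t - z^m|/√(4-t²) dt`. -/
theorem nuMeas_is_equilibrium (m : ℕ) (hm : 1 ≤ m) :
    IsProbabilityMeasure (nuMeas m) ∧
    nuMeas m (Estar m)ᶜ = 0 ∧
    ∀ z : ℂ, (∫ x, Real.log (‖x - z‖) ∂(nuMeas m))
      = (1 / ((m : ℝ) * Real.pi)) *
          ∫ t in (-2 : ℝ)..2, Real.log (‖(t : ℂ) - z ^ m‖) / Real.sqrt (4 - t ^ 2) := by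
  have hm0R : ((m:ℝ)) ≠ 0 := Nat.cast_ne_zero.2 (by omega)
  have hζabs : ∀ k : ℕ,
      ‖Complex.exp (Real.pi * (k:ℂ) * Complex.I / (m:ℂ))‖ = 1 := by
    intro k
    have harg : (Real.pi * (k : ℂ) * Complex.I / (m : ℂ))
        = ((Real.pi * k / m : ℝ) : ℂ) * Complex.I := by push_cast; ring
    rw [harg, Complex.norm_exp_ofReal_mul_I]
  have hφmeas : ∀ k : ℕ, Measurable fun t : ℝ =>
      Complex.exp (Real.pi * (k:ℂ) * Complex.I / (m:ℂ)) * (t:ℂ) :=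
    fun k => (continuous_const.mul Complex.continuous_ofReal).measurable
  refine ⟨?_, ?_, ?_⟩
  · -- probability measure
    constructor
    rw [nuMeas, Measure.finset_sum_apply]
    have hconst : ∀ k ∈ Finset.Icc 1 (2*m),
        (Measure.map (fun t : ℝ =>
          Complex.exp (Real.pi * (k : ℂ) * Complex.I / (m : ℂ)) * (t : ℂ)) (lamMeas m))
          Set.univ = ENNReal.ofReal (1 / (2 * (m:ℝ))) := by
      intro k _
      rw [Measure.map_apply (hφmeas k) MeasurableSet.univ, Set.preimage_univ, lam_univ m hm]
    rw [Finset.sum_congr rfl hconst, Finset.sum_const, Nat.card_Icc]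
    simp only [Nat.add_sub_cancel]
    rw [nsmul_eq_mul, ← ENNReal.ofReal_natCast (2*m), ← ENNReal.ofReal_mul (by positivity)]
    have : ((2*m : ℕ) : ℝ) * (1 / (2 * (m:ℝ))) = 1 := by
      push_cast
      field_simp
    rw [this, ENNReal.ofReal_one]
  · -- support
    rw [nuMeas, Measure.finset_sum_apply]
    refine Finset.sum_eq_zero (fun k _ => ?_)
    rw [Measure.map_apply (hφmeas k) (estar_closed m).measurableSet.compl]
    refine measure_mono_null ?_ (lam_compl_Icc m)
    intro t ht
    simp only [Set.mem_preimage, Set.mem_compl_iff] at ht ⊢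
    intro htI
    exact ht (mem_estar m hm k htI)
  · -- potential
    intro z
    set S := Finset.Icc 1 (2*m) with hS
    set F : ℝ → ℝ := fun u => Real.log (‖((u:ℂ))^2 - z^(2*m)‖) with hF
    have hfmeas : Measurable fun x : ℂ => Real.log (‖x - z‖) :=
      Real.measurable_log.comp (continuous_norm.comp
        (continuous_id.sub continuous_const)).measurable
    have hIntL : ∀ k ∈ S, Integrable (fun t : ℝ => Real.log (‖Complex.exp (Real.pi * (k:ℂ) * Complex.I / (m:ℂ)) * (t:ℂ) - z‖)) (lamMeas m) :=
      fun k _ => integrable_log_lam m hm _ z (hζabs k)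
    have hIntk : ∀ k ∈ S, Integrable (fun x : ℂ => Real.log (‖x - z‖))
        (Measure.map (fun t : ℝ =>
          Complex.exp (Real.pi * (k : ℂ) * Complex.I / (m : ℂ)) * (t : ℂ)) (lamMeas m)) := by
      intro k hk
      rw [integrable_map_measure hfmeas.aestronglyMeasurable (hφmeas k).aemeasurable]
      exact hIntL k hk
    have hprod_ae : ∀ᵐ (t : ℝ) ∂(lamMeas m),
        (∑ k ∈ S, Real.log (‖Complex.exp (Real.pi * (k:ℂ) * Complex.I / (m:ℂ)) * (t:ℂ) - z‖))
          = F (t^m) := by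
      have hac : lamMeas m ≪ (volume : Measure ℝ) :=
        (withDensity_absolutelyContinuous _ _).trans
          (Measure.absolutelyContinuous_of_le Measure.restrict_le_self)
      have hNfin : {t : ℝ | ∃ k ∈ S, Complex.exp (Real.pi * (k:ℂ) * Complex.I / (m:ℂ)) * (t:ℂ) = z}.Finite := by
        have hsub : {t : ℝ | ∃ k ∈ S, Complex.exp (Real.pi * (k:ℂ) * Complex.I / (m:ℂ)) * (t:ℂ) = z}
            ⊆ ⋃ k ∈ S, {t : ℝ | Complex.exp (Real.pi * (k:ℂ) * Complex.I / (m:ℂ)) * (t:ℂ) = z} := by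
          intro t ht
          simp only [Set.mem_setOf_eq, Set.mem_iUnion] at ht ⊢
          simpa using ht
        refine Set.Finite.subset (Set.Finite.biUnion S.finite_toSet (fun k _ => ?_)) hsub
        refine Set.Subsingleton.finite ?_
        intro a ha b hb
        have hζ0 : Complex.exp (Real.pi * (k:ℂ) * Complex.I / (m:ℂ)) ≠ 0 := Complex.exp_ne_zero _
        have hab : ((a:ℝ):ℂ) = ((b:ℝ):ℂ) := mul_left_cancel₀ hζ0 (ha.trans hb.symm)
        exact_mod_cast hab
      have hN0 : lamMeas m {t : ℝ | ∃ k ∈ S,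
          Complex.exp (Real.pi * (k:ℂ) * Complex.I / (m:ℂ)) * (t:ℂ) = z} = 0 :=
        hac (hNfin.measure_zero _)
      have hae : ∀ᵐ (t : ℝ) ∂(lamMeas m), ¬ ∃ k ∈ S,
          Complex.exp (Real.pi * (k:ℂ) * Complex.I / (m:ℂ)) * (t:ℂ) = z := by
        rw [ae_iff]
        simpa using hN0
      filter_upwards [hae] with t ht
      push_neg at ht
      have hstep : ∀ k ∈ S, Real.log (‖Complex.exp (Real.pi * (k:ℂ) * Complex.I / (m:ℂ)) * (t:ℂ) - z‖)
          = Real.log (‖z - Complex.exp (Real.pi * (k:ℂ) * Complex.I / (m:ℂ)) * (t:ℂ)‖) :=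
        fun k _ => by rw [norm_sub_rev]
      rw [Finset.sum_congr rfl hstep,
        ← Real.log_prod (fun k hk => norm_ne_zero_iff.mpr
          (sub_ne_zero.2 (fun h => ht k hk h.symm))),
        ← norm_prod, prod_ident m hm z ((t:ℝ):ℂ)]
      have hcast : (((t^m : ℝ)):ℂ)^2 = ((t:ℂ))^(2*m) := by
        push_cast
        rw [← pow_mul, mul_comm]
      show Real.log (‖z ^ (2*m) - ((t:ℂ))^(2*m)‖)
        = Real.log (‖(((t^m : ℝ)):ℂ)^2 - z^(2*m)‖)
      rw [hcast, norm_sub_rev]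
    have hpt : ∀ u : ℝ, F u / ((m:ℝ) * Real.pi * Real.sqrt (4 - u^2))
        = (1/((m:ℝ) * Real.pi)) * (F u / Real.sqrt (4 - u^2)) := by
      intro u
      rw [div_mul_div_comm, one_mul]
    have hz2m : z^(2*m) = (z^m)^2 := by rw [mul_comm, pow_mul]
    calc ∫ x, Real.log (‖x - z‖) ∂(nuMeas m)
        = ∑ k ∈ S, ∫ x, Real.log (‖x - z‖)
            ∂(Measure.map (fun t : ℝ =>
              Complex.exp (Real.pi * (k : ℂ) * Complex.I / (m : ℂ)) * (t : ℂ)) (lamMeas m)) := by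
          rw [nuMeas]
          exact integral_finset_sum_measure hIntk
      _ = ∑ k ∈ S, ∫ t, Real.log (‖Complex.exp (Real.pi * (k:ℂ) * Complex.I / (m:ℂ)) * (t:ℂ) - z‖) ∂(lamMeas m) :=
          Finset.sum_congr rfl (fun k _ =>
            integral_map (hφmeas k).aemeasurable hfmeas.aestronglyMeasurable)
      _ = ∫ t, ∑ k ∈ S, Real.log (‖Complex.exp (Real.pi * (k:ℂ) * Complex.I / (m:ℂ)) * (t:ℂ) - z‖) ∂(lamMeas m) :=
          (integral_finset_sum S hIntL).symm
      _ = ∫ t, F (t^m) ∂(lamMeas m) := integral_congr_ae hprod_ae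
      _ = ∫ u in Ioo (0:ℝ) 2, F u / ((m:ℝ) * Real.pi * Real.sqrt (4 - u^2)) := key_cov m hm F
      _ = (1/((m:ℝ) * Real.pi)) * ∫ u in Ioo (0:ℝ) 2, F u / Real.sqrt (4 - u^2) := by
          simp_rw [hpt]
          rw [MeasureTheory.integral_const_mul]
      _ = (1 / ((m : ℝ) * Real.pi)) *
          ∫ t in (-2 : ℝ)..2, Real.log (‖(t : ℂ) - z ^ m‖) / Real.sqrt (4 - t ^ 2) := by
          congr 1
          have := split_log (z^m)
          rw [← hz2m] at this
          exact this
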